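/- For every positive integer m, every Apollonian network with m bounded faces contains a simple path on at least m^{log 2 / log 3} + 2 vertices. -/

import Mathlib

/-- `Apollonian n F` : `F` is the set of (bounded) faces, each a 3-element set of
vertex labels `0, ..., n-1`, of an Apollonian network on `n` vertices, built from the
triangle `{0,1,2}` by repeatedly subdividing a face with a fresh vertex. -/
inductive Apollonian : ℕ → Finset (Finset ℕ) → Prop
  | base : Apollonian 3 {({0, 1, 2} : Finset ℕ)}
  | step {n : ℕ} {F : Finset (Finset ℕ)} (t : Finset ℕ) (ht : t ∈ F)
      (h : Apollonian n F) :
      Apollonian (n + 1) ((F.erase t) ∪ t.image (fun v => insert n (t.erase v)))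

/-- The graph of an Apollonian network: two distinct vertices are adjacent iff they lie
on a common face. -/
def apGraph (F : Finset (Finset ℕ)) : SimpleGraph ℕ where
  Adj u v := u ≠ v ∧ ∃ f ∈ F, u ∈ f ∧ v ∈ f
  symm := by
    constructor
    rintro u v ⟨h, f, hf, hu, hv⟩
    exact ⟨h.symm, f, hf, hv, hu⟩
  loopless := by
    constructor
    rintro u ⟨h, -⟩
    exact h rfl

open Finset

noncomputable def xiA : ℝ := Real.log 2 / Real.log 3

lemma xiA_pos : 0 < xiA := div_pos (Real.log_pos one_lt_two) (Real.log_pos (by norm_num))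

lemma xiA_lt_one : xiA < 1 := by
  rw [xiA, div_lt_one (Real.log_pos (by norm_num))]
  exact Real.log_lt_log (by norm_num) (by norm_num)

lemma three_rpow_xiA : (3:ℝ) ^ xiA = 2 := by
  rw [xiA, Real.rpow_def_of_pos (by norm_num : (0:ℝ) < 3)]
  rw [mul_div_assoc', mul_comm, mul_div_assoc, div_self (ne_of_gt (Real.log_pos (by norm_num : (1:ℝ) < 3))), mul_one, Real.exp_log (by norm_num)]

-- chord bound: for m > 0, 0 ≤ b ≤ m/3 : (m - 2*b)^xiA ≥ m^xiA - (3/2) * b * m^xiA / m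
lemma chordA {m b : ℝ} (hm : 0 < m) (hb : 0 ≤ b) (hb3 : 3 * b ≤ m) :
    m ^ xiA - (3/2) * b * (m ^ xiA / m) ≤ (m - 2*b) ^ xiA := by
  have hcon := Real.concaveOn_rpow (le_of_lt xiA_pos) (le_of_lt xiA_lt_one)
  have h3 : (0:ℝ) ≤ m/3 := by linarith
  have hl : (0:ℝ) ≤ 3*b/m := by positivity
  have hr : (0:ℝ) ≤ 1 - 3*b/m := by
    rw [sub_nonneg, div_le_one hm]; linarith
  have hab : 3*b/m + (1 - 3*b/m) = 1 := by ring
  have := hcon.2 (Set.mem_Ici.mpr h3) (Set.mem_Ici.mpr (le_of_lt hm)) hl hr hab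
  have hpt : (3*b/m) • (m/3) + (1 - 3*b/m) • m = m - 2*b := by
    have hm0 : m ≠ 0 := hm.ne'
    simp only [smul_eq_mul]
    field_simp
    ring
  rw [hpt] at this
  refine le_trans (le_of_eq ?_) this
  simp only [smul_eq_mul]
  have hm3 : (m/3) ^ xiA = m ^ xiA / 2 := by
    rw [Real.div_rpow (le_of_lt hm) (by norm_num), three_rpow_xiA]
  rw [hm3]
  field_simp
  ring

lemma smallA {m b : ℝ} (hm : 0 < m) (hb : 0 ≤ b) (hb3 : 3*b ≤ m) :
    (3/2) * b * (m ^ xiA / m) ≤ b ^ xiA := by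
  rcases eq_or_lt_of_le hb with rfl|hbp
  · simp [Real.zero_rpow (ne_of_gt xiA_pos)]
  have hm3 : (0:ℝ) < m/3 := by linarith
  have h2 : (m/3) ^ (xiA - 1) ≤ b ^ (xiA - 1) :=
    Real.rpow_le_rpow_of_nonpos hbp (by linarith) (by linarith [xiA_lt_one])
  have h3 : (m/3) ^ (xiA-1) = (3/2) * (m^xiA/m) := by
    rw [Real.rpow_sub hm3, Real.rpow_one, Real.div_rpow hm.le (by norm_num), three_rpow_xiA]
    field_simp
  have h1 : b ^ xiA = b * b ^ (xiA - 1) := by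
    rw [← Real.rpow_one_add' (le_of_lt hbp) (by ring_nf; exact ne_of_gt xiA_pos)]
    ring_nf
  rw [h1]
  calc (3/2) * b * (m ^ xiA / m) = b * ((3/2) * (m^xiA/m)) := by ring
    _ = b * (m/3)^(xiA-1) := by rw [h3]
    _ ≤ b * b^(xiA-1) := mul_le_mul_of_nonneg_left h2 hb

lemma keyA_aux {a b c : ℝ} (hc0 : 0 ≤ c) (hca : c ≤ a) (hcb : c ≤ b) (hba : b ≤ a) :
    (a+b+c) ^ xiA ≤ a ^ xiA + b ^ xiA := by
  have hb0 : 0 ≤ b := le_trans hc0 hcb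
  have ha0 : 0 ≤ a := le_trans hb0 hba
  set m : ℝ := a + b + c with hmdef
  rcases le_or_gt m 0 with hm | hm
  · have hae : a = 0 := le_antisymm (by linarith) ha0
    have hbe : b = 0 := le_antisymm (by linarith) hb0
    have hce : c = 0 := le_antisymm (by linarith) hc0
    simp [hmdef, hae, hbe, hce, Real.zero_rpow (ne_of_gt xiA_pos)]
  rcases le_or_gt m (3*b) with h3 | h3
  · -- b ≥ m/3 : m^ξ ≤ (3b)^ξ = 2 b^ξ ≤ a^ξ + b^ξ
    have h1 : m ^ xiA ≤ (3*b) ^ xiA := Real.rpow_le_rpow hm.le h3 xiA_pos.le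
    have h2 : (3*b) ^ xiA = 2 * b ^ xiA := by
      rw [Real.mul_rpow (by norm_num) hb0, three_rpow_xiA]
    have h4 : b ^ xiA ≤ a ^ xiA := Real.rpow_le_rpow hb0 hba xiA_pos.le
    linarith
  · have h1 := chordA hm hb0 h3.le
    have h2 := smallA hm hb0 h3.le
    have h5 : (m - 2*b) ^ xiA ≤ a ^ xiA := by
      apply Real.rpow_le_rpow (by linarith) (by linarith) xiA_pos.le
    linarith

lemma keyA {a b c : ℝ} (hc0 : 0 ≤ c) (hca : c ≤ a) (hcb : c ≤ b) :
    (a+b+c) ^ xiA ≤ a ^ xiA + b ^ xiA := by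
  rcases le_total b a with h | h
  · exact keyA_aux hc0 hca hcb h
  · rw [show a+b+c = b+a+c by ring]
    linarith [keyA_aux hc0 hcb hca h]

inductive Ap2 : Finset ℕ → Finset ℕ → Finset (Finset ℕ) → Prop
  | base (t : Finset ℕ) (ht : t.card = 3) : Ap2 t t {t}
  | step {t V F} (s : Finset ℕ) (hs : s ∈ F) (v : ℕ) (hv : v ∉ V)
      (h : Ap2 t V F) :
      Ap2 t (insert v V) ((F.erase s) ∪ s.image (fun u => insert v (s.erase u)))

lemma Ap2.t_card {t V F} (h : Ap2 t V F) : t.card = 3 := by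
  induction h with
  | base ht => exact ht
  | step s hs v hv h ih => exact ih

lemma Ap2.t_subset {t V F} (h : Ap2 t V F) : t ⊆ V := by
  induction h with
  | base ht => exact Finset.Subset.refl _
  | step s hs v hv h ih => exact ih.trans (Finset.subset_insert _ _)

lemma Ap2.face_sub {t V F} (h : Ap2 t V F) : ∀ f ∈ F, f ⊆ V := by
  induction h with
  | base ht => intro f hf; rw [Finset.mem_singleton] at hf; subst hf; exact Finset.Subset.refl _
  | step s hs v hv h ih =>
    intro f hf
    rcases Finset.mem_union.mp hf with hf | hf
    · exact (ih f (Finset.mem_of_mem_erase hf)).trans (Finset.subset_insert _ _)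
    · obtain ⟨u, hu, rfl⟩ := Finset.mem_image.mp hf
      exact Finset.insert_subset_insert v (((Finset.erase_subset _ _).trans (ih s hs)))

lemma Ap2.face_card {t V F} (h : Ap2 t V F) : ∀ f ∈ F, f.card = 3 := by
  induction h with
  | base ht => intro f hf; rw [Finset.mem_singleton] at hf; subst hf; exact ht
  | step s hs v hv h ih =>
    intro f hf
    rcases Finset.mem_union.mp hf with hf | hf
    · exact ih f (Finset.mem_of_mem_erase hf)
    · obtain ⟨u, hu, rfl⟩ := Finset.mem_image.mp hf
      rw [Finset.card_insert_of_notMem, Finset.card_erase_of_mem hu, ih s hs]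
      intro hmem
      exact hv (h.face_sub s hs (Finset.mem_of_mem_erase hmem))

lemma Ap2.nonempty {t V F} (h : Ap2 t V F) : F.Nonempty := by
  induction h with
  | base ht => exact ⟨t, Finset.mem_singleton_self t⟩
  | step s hs v hv h ih =>
    have hsne : s.Nonempty := Finset.card_pos.mp (by rw [h.face_card s hs]; norm_num)
    exact ⟨insert v (s.erase (hsne.choose)),
      Finset.mem_union_right _ (Finset.mem_image_of_mem _ hsne.choose_spec)⟩

lemma Ap2.edge {t V F} (h : Ap2 t V F) : ∀ u w, u ∈ t → w ∈ t →
    ∃ f ∈ F, u ∈ f ∧ w ∈ f := by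
  induction h with
  | base ht => intro u w hu hw; exact ⟨_, Finset.mem_singleton_self _, hu, hw⟩
  | step s hs v hv h ih =>
    intro u w hu hw
    obtain ⟨f, hf, huf, hwf⟩ := ih u w hu hw
    by_cases hfs : f = s
    · subst hfs
      have hns : ¬ f ⊆ {u, w} := by
        intro hsub
        have := Finset.card_le_card hsub
        have h2 : ({u,w} : Finset ℕ).card ≤ 2 := Finset.card_insert_le _ _ |>.trans (by simp)
        rw [h.face_card f hs] at this
        omega
      obtain ⟨x, hxf, hxuw⟩ := Finset.not_subset.mp hns
      simp only [Finset.mem_insert, Finset.mem_singleton, not_or] at hxuw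
      refine ⟨insert v (f.erase x), Finset.mem_union_right _ (Finset.mem_image_of_mem _ hxf), ?_, ?_⟩
      · exact Finset.mem_insert_of_mem (Finset.mem_erase.mpr ⟨fun he => hxuw.1 he.symm, huf⟩)
      · exact Finset.mem_insert_of_mem (Finset.mem_erase.mpr ⟨fun he => hxuw.2 he.symm, hwf⟩)
    · exact ⟨f, Finset.mem_union_left _ (Finset.mem_erase.mpr ⟨hfs, hf⟩), huf, hwf⟩

lemma Ap2.single {t V F} (h : Ap2 t V F) (hF : F = {t}) : V = t := by
  cases h with
  | base ht => rfl
  | step s hs v hv h =>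
    exfalso
    have hsne : s.Nonempty := Finset.card_pos.mp (by rw [h.face_card s hs]; norm_num)
    have hmem : insert v (s.erase hsne.choose) ∈ ({t} : Finset (Finset ℕ)) := by
      rw [← hF]
      exact Finset.mem_union_right _ (Finset.mem_image_of_mem _ hsne.choose_spec)
    rw [Finset.mem_singleton] at hmem
    have : v ∈ t := by rw [← hmem]; exact Finset.mem_insert_self _ _
    exact hv (h.t_subset this)

lemma ap2_of_apollonian {n F} (h : Apollonian n F) : Ap2 {0,1,2} (Finset.range n) F := by
  induction h with
  | base =>
    have : Finset.range 3 = ({0,1,2} : Finset ℕ) := by decide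
    rw [this]
    exact Ap2.base _ (by decide)
  | step t ht h ih =>
    rw [Finset.range_add_one]
    exact Ap2.step t ht _ (by simp) ih
lemma disj_new {F1 F2 : Finset (Finset ℕ)} {V2 : Finset ℕ} (hd : Disjoint F1 F2)
    (hsub : ∀ f ∈ F2, f ⊆ V2) {s : Finset ℕ} {v' : ℕ} (hv : v' ∉ V2) :
    Disjoint ((F1.erase s) ∪ s.image (fun u => insert v' (s.erase u))) F2 := by
  rw [Finset.disjoint_left]
  intro f hf hf2
  rcases Finset.mem_union.mp hf with hf | hf
  · exact (Finset.disjoint_left.mp hd (Finset.mem_of_mem_erase hf)) hf2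
  · obtain ⟨u, hu, rfl⟩ := Finset.mem_image.mp hf
    exact hv (hsub _ hf2 (Finset.mem_insert_self _ _))

lemma card3 {x y z : ℕ} (hxy : x ≠ y) (hxz : x ≠ z) (hyz : y ≠ z) :
    ({x, y, z} : Finset ℕ).card = 3 := by
  rw [Finset.card_insert_of_notMem (by simp [hxy, hxz]),
    Finset.card_insert_of_notMem (by simp [hyz]), Finset.card_singleton]

lemma decomp {t V F} (h : Ap2 t V F) : ∀ (hne : F ≠ {t}) (a b c : ℕ),
    t = {a,b,c} → a ≠ b → a ≠ c → b ≠ c →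
    ∃ v V1 V2 V3 F1 F2 F3,
      v ∉ t ∧
      Ap2 {a,b,v} V1 F1 ∧ Ap2 {b,c,v} V2 F2 ∧ Ap2 {a,c,v} V3 F3 ∧
      F1 ∪ F2 ∪ F3 = F ∧
      Disjoint F1 F2 ∧ Disjoint F1 F3 ∧ Disjoint F2 F3 ∧
      V1 ∪ V2 ∪ V3 = V ∧
      V1 ∩ V2 = {b, v} ∧ V1 ∩ V3 = {a, v} ∧ V2 ∩ V3 = {c, v} := by
  induction h with
  | base ht => intro hne; exact absurd rfl hne
  | @step V F s hs v' hv' h ih =>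
    intro hne a b c htabc hab hac hbc
    have htv : t ⊆ V := h.t_subset
    have hv't : v' ∉ t := fun hm => hv' (htv hm)
    subst htabc
    have hv'a : v' ≠ a := fun he => hv't (by simp [he])
    have hv'b : v' ≠ b := fun he => hv't (by simp [he])
    have hv'c : v' ≠ c := fun he => hv't (by simp [he])
    by_cases hFt : F = {(({a,b,c} : Finset ℕ))}
    · -- first subdivision
      subst hFt
      rw [Finset.mem_singleton] at hs
      subst hs
      have hV : V = ({a,b,c} : Finset ℕ) := h.single rfl
      subst hV
      refine ⟨v', {a,b,v'}, {b,c,v'}, {a,c,v'}, {({a,b,v'} : Finset ℕ)}, {({b,c,v'} : Finset ℕ)},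
        {({a,c,v'} : Finset ℕ)}, hv't,
        Ap2.base _ (card3 hab hv'a.symm hv'b.symm),
        Ap2.base _ (card3 hbc hv'b.symm hv'c.symm),
        Ap2.base _ (card3 hac hv'a.symm hv'c.symm), ?_, ?_, ?_, ?_, ?_, ?_, ?_, ?_⟩
      · -- faces union
        ext f
        simp only [Finset.mem_union, Finset.mem_singleton, Finset.erase_singleton,
          Finset.notMem_empty, false_or, Finset.mem_image]
        constructor
        · rintro ((rfl | rfl) | rfl)
          · exact ⟨c, by simp, by ext x; simp; omega⟩
          · exact ⟨a, by simp, by ext x; simp; omega⟩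
          · exact ⟨b, by simp, by ext x; simp; omega⟩
        · rintro ⟨u, hu, rfl⟩
          simp only [Finset.mem_insert, Finset.mem_singleton] at hu
          rcases hu with rfl | rfl | rfl
          · left; right; ext x; simp; omega
          · right; ext x; simp; omega
          · left; left; ext x; simp; omega
      · rw [Finset.disjoint_singleton]
        intro he
        have : a ∈ ({b,c,v'} : Finset ℕ) := he ▸ (by simp)
        simp at this; omega
      · rw [Finset.disjoint_singleton]
        intro he
        have : b ∈ ({a,c,v'} : Finset ℕ) := he ▸ (by simp)
        simp at this; omega
      · rw [Finset.disjoint_singleton]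
        intro he
        have : b ∈ ({a,c,v'} : Finset ℕ) := he ▸ (by simp)
        simp at this; omega
      · ext x; simp; omega
      · ext x; simp; omega
      · ext x; simp; omega
      · ext x; simp; omega
    · -- recursive case
      obtain ⟨v, V1, V2, V3, F1, F2, F3, hvt, h1, h2, h3, hFu, d12, d13, d23,
        hVu, i12, i13, i23⟩ := ih hFt a b c rfl hab hac hbc
      have hV1 : V1 ⊆ V := by rw [← hVu]; intro x hx; simp [hx]
      have hV2 : V2 ⊆ V := by rw [← hVu]; intro x hx; simp [hx]
      have hV3 : V3 ⊆ V := by rw [← hVu]; intro x hx; simp [hx]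
      have hv1 : v' ∉ V1 := fun hx => hv' (hV1 hx)
      have hv2 : v' ∉ V2 := fun hx => hv' (hV2 hx)
      have hv3 : v' ∉ V3 := fun hx => hv' (hV3 hx)
      have hsF : s ∈ F1 ∪ F2 ∪ F3 := by rw [hFu]; exact hs
      rcases Finset.mem_union.mp hsF with hs' | hs3
      rcases Finset.mem_union.mp hs' with hs1 | hs2
      · -- s ∈ F1
        have hs2' : s ∉ F2 := Finset.disjoint_left.mp d12 hs1
        have hs3' : s ∉ F3 := Finset.disjoint_left.mp d13 hs1
        refine ⟨v, insert v' V1, V2, V3,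
          (F1.erase s) ∪ s.image (fun u => insert v' (s.erase u)), F2, F3, hvt,
          Ap2.step s hs1 v' hv1 h1, h2, h3, ?_, ?_, ?_, d23, ?_, ?_, ?_, i23⟩
        · ext f
          rw [← hFu]
          simp only [Finset.mem_union, Finset.mem_erase]
          constructor
          · rintro ((⟨⟨hne1, hf1⟩ | hfi⟩ | hf2) | hf3)
            · exact Or.inl ⟨hne1, Or.inl (Or.inl hf1)⟩
            · exact Or.inr hfi
            · exact Or.inl ⟨fun he => hs2' (he ▸ hf2), Or.inl (Or.inr hf2)⟩
            · exact Or.inl ⟨fun he => hs3' (he ▸ hf3), Or.inr hf3⟩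
          · rintro (⟨hne1, (hf1 | hf2) | hf3⟩ | hfi)
            · exact Or.inl (Or.inl (Or.inl ⟨hne1, hf1⟩))
            · exact Or.inl (Or.inr hf2)
            · exact Or.inr hf3
            · exact Or.inl (Or.inl (Or.inr hfi))
        · exact disj_new d12 h2.face_sub hv2
        · exact disj_new d13 h3.face_sub hv3
        · rw [Finset.insert_union, Finset.insert_union, hVu]
        · rw [Finset.insert_inter_of_notMem hv2, i12]
        · rw [Finset.insert_inter_of_notMem hv3, i13]
      · -- s ∈ F2
        have hs1' : s ∉ F1 := fun hx => Finset.disjoint_left.mp d12 hx hs2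
        have hs3' : s ∉ F3 := Finset.disjoint_left.mp d23 hs2
        refine ⟨v, V1, insert v' V2, V3, F1,
          (F2.erase s) ∪ s.image (fun u => insert v' (s.erase u)), F3, hvt,
          h1, Ap2.step s hs2 v' hv2 h2, h3, ?_, ?_, d13, ?_, ?_, ?_, i13, ?_⟩
        · ext f
          rw [← hFu]
          simp only [Finset.mem_union, Finset.mem_erase]
          constructor
          · rintro ((hf1 | ⟨⟨hne1, hf2⟩ | hfi⟩) | hf3)
            · exact Or.inl ⟨fun he => hs1' (he ▸ hf1), Or.inl (Or.inl hf1)⟩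
            · exact Or.inl ⟨hne1, Or.inl (Or.inr hf2)⟩
            · exact Or.inr hfi
            · exact Or.inl ⟨fun he => hs3' (he ▸ hf3), Or.inr hf3⟩
          · rintro (⟨hne1, (hf1 | hf2) | hf3⟩ | hfi)
            · exact Or.inl (Or.inl hf1)
            · exact Or.inl (Or.inr (Or.inl ⟨hne1, hf2⟩))
            · exact Or.inr hf3
            · exact Or.inl (Or.inr (Or.inr hfi))
        · exact (disj_new d12.symm h1.face_sub hv1).symm
        · exact disj_new d23 h3.face_sub hv3
        · rw [← hVu]; ext x; simp only [Finset.mem_union, Finset.mem_insert]; tauto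
        · rw [Finset.inter_insert_of_notMem hv1, i12]
        · rw [Finset.insert_inter_of_notMem hv3, i23]
      · -- s ∈ F3
        have hs1' : s ∉ F1 := fun hx => Finset.disjoint_left.mp d13 hx hs3
        have hs2' : s ∉ F2 := fun hx => Finset.disjoint_left.mp d23 hx hs3
        refine ⟨v, V1, V2, insert v' V3, F1, F2,
          (F3.erase s) ∪ s.image (fun u => insert v' (s.erase u)), hvt,
          h1, h2, Ap2.step s hs3 v' hv3 h3, ?_, d12, ?_, ?_, ?_, i12, ?_, ?_⟩
        · ext f
          rw [← hFu]
          simp only [Finset.mem_union, Finset.mem_erase]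
          constructor
          · rintro ((hf1 | hf2) | ⟨⟨hne1, hf3⟩ | hfi⟩)
            · exact Or.inl ⟨fun he => hs1' (he ▸ hf1), Or.inl (Or.inl hf1)⟩
            · exact Or.inl ⟨fun he => hs2' (he ▸ hf2), Or.inl (Or.inr hf2)⟩
            · exact Or.inl ⟨hne1, Or.inr hf3⟩
            · exact Or.inr hfi
          · rintro (⟨hne1, (hf1 | hf2) | hf3⟩ | hfi)
            · exact Or.inl (Or.inl hf1)
            · exact Or.inl (Or.inr hf2)
            · exact Or.inr (Or.inl ⟨hne1, hf3⟩)
            · exact Or.inr (Or.inr hfi)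
        · exact (disj_new d13.symm h1.face_sub hv1).symm
        · exact (disj_new d23.symm h2.face_sub hv2).symm
        · rw [← hVu]; ext x; simp only [Finset.mem_union, Finset.mem_insert]; tauto
        · rw [Finset.inter_insert_of_notMem hv1, i13]
        · rw [Finset.inter_insert_of_notMem hv2, i23]

lemma apGraph_mono {F F' : Finset (Finset ℕ)} (h : F ⊆ F') : apGraph F ≤ apGraph F' := by
  intro u v huv
  exact ⟨huv.1, by obtain ⟨f, hf, h1, h2⟩ := huv.2; exact ⟨f, h hf, h1, h2⟩⟩

lemma build_path {F FP FQ : Finset (Finset ℕ)} {VP VQ V : Finset ℕ} {a v b c : ℕ}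
    (hFP : FP ⊆ F) (hFQ : FQ ⊆ F) (hVP : VP ⊆ V) (hVQ : VQ ⊆ V)
    (p : (apGraph FP).Walk a v) (q : (apGraph FQ).Walk v b)
    (hp : p.IsPath) (hq : q.IsPath)
    (hps : ∀ x ∈ p.support, x ∈ VP) (hqs : ∀ x ∈ q.support, x ∈ VQ)
    (hmeet : ∀ x, x ∈ p.support → x ∈ q.support → x = v)
    (hcP : c ∉ p.support) (hcQ : c ∉ q.support) :
    ∃ w : (apGraph F).Walk a b, w.IsPath ∧ (∀ x ∈ w.support, x ∈ V) ∧ c ∉ w.support ∧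
      w.support.length + 1 = p.support.length + q.support.length := by
  let P := p.mapLe (apGraph_mono hFP)
  let Q := q.mapLe (apGraph_mono hFQ)
  have hPs : P.support = p.support := by
    simp only [P, SimpleGraph.Walk.mapLe, SimpleGraph.Walk.support_map]
    exact List.map_id _
  have hQs : Q.support = q.support := by
    simp only [Q, SimpleGraph.Walk.mapLe, SimpleGraph.Walk.support_map]
    exact List.map_id _
  have hP : P.IsPath := hp.mapLe _
  have hQ : Q.IsPath := hq.mapLe _
  refine ⟨P.append Q, ?_, ?_, ?_, ?_⟩
  · rw [SimpleGraph.Walk.isPath_def, SimpleGraph.Walk.support_append, List.nodup_append]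
    refine ⟨hP.support_nodup, ?_, ?_⟩
    · exact hQ.support_nodup.sublist (List.tail_sublist _)
    · intro x hxP y hxQt hxy
      subst hxy
      have hxQ : x ∈ Q.support := by
        rw [SimpleGraph.Walk.support_eq_cons Q]
        exact List.mem_cons_of_mem _ hxQt
      have hxv : x = v := hmeet x (hPs ▸ hxP) (hQs ▸ hxQ)
      have hnd := hQ.support_nodup
      rw [SimpleGraph.Walk.support_eq_cons Q, List.nodup_cons] at hnd
      exact hnd.1 (hxv ▸ hxQt)
  · intro x hx
    rw [SimpleGraph.Walk.support_append, List.mem_append] at hx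
    rcases hx with hx | hx
    · exact hVP (hps x (hPs ▸ hx))
    · refine hVQ (hqs x ?_)
      rw [← hQs, SimpleGraph.Walk.support_eq_cons Q]
      exact List.mem_cons_of_mem _ hx
  · rw [SimpleGraph.Walk.support_append, List.mem_append]
    rintro (hx | hx)
    · exact hcP (hPs ▸ hx)
    · refine hcQ ?_
      rw [← hQs, SimpleGraph.Walk.support_eq_cons Q] at hcQ ⊢
      exact List.mem_cons_of_mem _ (hQs ▸ hx)
  · rw [SimpleGraph.Walk.support_append, List.length_append, List.length_tail, hPs, hQs]
    have : q.support.length ≠ 0 := by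
      rw [SimpleGraph.Walk.support_eq_cons q]; simp
    omega

lemma mainA : ∀ (m : ℕ) (t V F : _), Ap2 t V F → F.card = m →
    ∀ a b c : ℕ, t = {a,b,c} → a ≠ b → a ≠ c → b ≠ c →
    ∃ p : (apGraph F).Walk a b, p.IsPath ∧ (∀ x ∈ p.support, x ∈ V) ∧ c ∉ p.support ∧
      (m : ℝ) ^ xiA + 1 ≤ p.support.length := by
  intro m
  induction m using Nat.strong_induction_on with
  | _ m ih =>
  intro t V F hA hcard a b c ht hab hac hbc
  by_cases hFt : F = {t}
  · -- single face
    have hm1 : m = 1 := by rw [← hcard, hFt]; simp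
    have hadj : (apGraph F).Adj a b := ⟨hab, t, by simp [hFt], by simp [ht], by simp [ht]⟩
    refine ⟨SimpleGraph.Walk.cons hadj SimpleGraph.Walk.nil, ?_, ?_, ?_, ?_⟩
    · simp [SimpleGraph.Walk.isPath_def, hab]
    · intro x hx
      simp only [SimpleGraph.Walk.support_cons, SimpleGraph.Walk.support_nil,
        List.mem_cons, List.mem_singleton, List.not_mem_nil, or_false] at hx
      rcases hx with rfl | rfl
      · exact hA.t_subset (by simp [ht])
      · exact hA.t_subset (by simp [ht])
    · simp only [SimpleGraph.Walk.support_cons, SimpleGraph.Walk.support_nil,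
        List.mem_cons, List.mem_singleton, List.not_mem_nil, or_false]
      push_neg
      exact ⟨Ne.symm hac, Ne.symm hbc⟩
    · simp only [SimpleGraph.Walk.support_cons, SimpleGraph.Walk.support_nil]
      rw [hm1]
      simp [Real.one_rpow]
      norm_num
  · obtain ⟨v, V1, V2, V3, F1, F2, F3, hvt, h1, h2, h3, hFu, d12, d13, d23,
      hVu, i12, i13, i23⟩ := decomp hA hFt a b c ht hab hac hbc
    have hva : v ≠ a := fun he => hvt (by simp [ht, he])
    have hvb : v ≠ b := fun he => hvt (by simp [ht, he])
    have hvc : v ≠ c := fun he => hvt (by simp [ht, he])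
    have hF1 : F1 ⊆ F := by rw [← hFu]; intro x hx; simp [hx]
    have hF2 : F2 ⊆ F := by rw [← hFu]; intro x hx; simp [hx]
    have hF3 : F3 ⊆ F := by rw [← hFu]; intro x hx; simp [hx]
    have hV1 : V1 ⊆ V := by rw [← hVu]; intro x hx; simp [hx]
    have hV2 : V2 ⊆ V := by rw [← hVu]; intro x hx; simp [hx]
    have hV3 : V3 ⊆ V := by rw [← hVu]; intro x hx; simp [hx]
    set m1 := F1.card with hm1
    set m2 := F2.card with hm2
    set m3 := F3.card with hm3
    have hd123 : Disjoint (F1 ∪ F2) F3 := Finset.disjoint_union_left.mpr ⟨d13, d23⟩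
    have hmsum : m = m1 + m2 + m3 := by
      rw [← hcard, ← hFu, Finset.card_union_of_disjoint hd123,
        Finset.card_union_of_disjoint d12]
    have hp1 : 0 < m1 := Finset.card_pos.mpr h1.nonempty
    have hp2 : 0 < m2 := Finset.card_pos.mpr h2.nonempty
    have hp3 : 0 < m3 := Finset.card_pos.mpr h3.nonempty
    -- c is not in V1
    have hcV1 : c ∉ V1 := by
      intro hcv
      have : c ∈ V1 ∩ V2 := Finset.mem_inter.mpr ⟨hcv, h2.t_subset (by simp)⟩
      rw [i12] at this
      simp only [Finset.mem_insert, Finset.mem_singleton] at this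
      omega
    by_cases hc3 : m3 ≤ m1 ∧ m3 ≤ m2
    · -- use regions 1 and 2
      obtain ⟨p1, hq1, hs1, hb1, hl1⟩ := ih m1 (by omega) _ _ _ h1 rfl a v b
        (by ext x; simp; omega) (Ne.symm hva) hab hvb
      obtain ⟨p2, hq2, hs2, hb2, hl2⟩ := ih m2 (by omega) _ _ _ h2 rfl v b c
        (by ext x; simp; omega) hvb hvc hbc
      obtain ⟨w, hw, hwV, hwc, hwlen⟩ := build_path hF1 hF2 hV1 hV2 p1 p2 hq1 hq2 hs1 hs2
        (fun x hx1 hx2 => by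
          have : x ∈ V1 ∩ V2 := Finset.mem_inter.mpr ⟨hs1 x hx1, hs2 x hx2⟩
          rw [i12] at this
          simp only [Finset.mem_insert, Finset.mem_singleton] at this
          rcases this with rfl | rfl
          · exact absurd hx1 hb1
          · rfl)
        (fun hcs => hcV1 (hs1 c hcs)) hb2
      refine ⟨w, hw, hwV, hwc, ?_⟩
      have key := keyA (a := (m1:ℝ)) (b := (m2:ℝ)) (c := (m3:ℝ)) (by positivity)
        (by exact_mod_cast hc3.1) (by exact_mod_cast hc3.2)
      have hms : (m:ℝ) = (m1:ℝ) + (m2:ℝ) + (m3:ℝ) := by rw [hmsum]; push_cast; ring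
      have hcast : (w.support.length : ℝ) + 1 = p1.support.length + p2.support.length := by
        exact_mod_cast congrArg (Nat.cast : ℕ → ℝ) hwlen
      rw [hms]
      linarith
    · by_cases hc1 : m1 ≤ m2 ∧ m1 ≤ m3
      · -- use regions 3 and 2
        obtain ⟨p1, hq1, hs1, hb1, hl1⟩ := ih m3 (by omega) _ _ _ h3 rfl a v c
          (by ext x; simp; omega) (Ne.symm hva) hac hvc
        obtain ⟨p2, hq2, hs2, hb2, hl2⟩ := ih m2 (by omega) _ _ _ h2 rfl v b c
          (by ext x; simp; omega) hvb hvc hbc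
        obtain ⟨w, hw, hwV, hwc, hwlen⟩ := build_path hF3 hF2 hV3 hV2 p1 p2 hq1 hq2 hs1 hs2
          (fun x hx1 hx2 => by
            have : x ∈ V2 ∩ V3 := Finset.mem_inter.mpr ⟨hs2 x hx2, hs1 x hx1⟩
            rw [i23] at this
            simp only [Finset.mem_insert, Finset.mem_singleton] at this
            rcases this with rfl | rfl
            · exact absurd hx1 hb1
            · rfl)
          hb1 hb2
        refine ⟨w, hw, hwV, hwc, ?_⟩
        have key := keyA (a := (m3:ℝ)) (b := (m2:ℝ)) (c := (m1:ℝ)) (by positivity)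
          (by exact_mod_cast hc1.2) (by exact_mod_cast hc1.1)
        have hms : (m:ℝ) = (m3:ℝ) + (m2:ℝ) + (m1:ℝ) := by rw [hmsum]; push_cast; ring
        have hcast : (w.support.length : ℝ) + 1 = p1.support.length + p2.support.length := by
          exact_mod_cast congrArg (Nat.cast : ℕ → ℝ) hwlen
        rw [hms]
        linarith
      · -- m2 is the minimum: use regions 3 and 1
        have hc2 : m2 ≤ m1 ∧ m2 ≤ m3 := by omega
        obtain ⟨p1, hq1, hs1, hb1, hl1⟩ := ih m3 (by omega) _ _ _ h3 rfl a v c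
          (by ext x; simp; omega) (Ne.symm hva) hac hvc
        obtain ⟨p2, hq2, hs2, hb2, hl2⟩ := ih m1 (by omega) _ _ _ h1 rfl v b a
          (by ext x; simp; omega) hvb hva (Ne.symm hab)
        obtain ⟨w, hw, hwV, hwc, hwlen⟩ := build_path hF3 hF1 hV3 hV1 p1 p2 hq1 hq2 hs1 hs2
          (fun x hx1 hx2 => by
            have : x ∈ V1 ∩ V3 := Finset.mem_inter.mpr ⟨hs2 x hx2, hs1 x hx1⟩
            rw [i13] at this
            simp only [Finset.mem_insert, Finset.mem_singleton] at this
            rcases this with rfl | rfl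
            · exact absurd hx2 hb2
            · rfl)
          hb1 (fun hcs => hcV1 (hs2 c hcs))
        refine ⟨w, hw, hwV, hwc, ?_⟩
        have key := keyA (a := (m3:ℝ)) (b := (m1:ℝ)) (c := (m2:ℝ)) (by positivity)
          (by exact_mod_cast hc2.2) (by exact_mod_cast hc2.1)
        have hms : (m:ℝ) = (m3:ℝ) + (m1:ℝ) + (m2:ℝ) := by rw [hmsum]; push_cast; ring
        have hcast : (w.support.length : ℝ) + 1 = p1.support.length + p2.support.length := by
          exact_mod_cast congrArg (Nat.cast : ℕ → ℝ) hwlen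
        rw [hms]
        linarith

/-- Every Apollonian network with `m` faces contains a simple path on at least
`m^(log 2 / log 3) + 2` vertices. -/
theorem apollonian_long_path (m n : ℕ) (hm : 0 < m) (F : Finset (Finset ℕ))
    (hA : Apollonian n F) (hF : F.card = m) :
    ∃ (u v : ℕ) (p : (apGraph F).Walk u v), p.IsPath ∧
      (m : ℝ) ^ (Real.log 2 / Real.log 3) + 2 ≤ p.support.length := by
  have hA2 := ap2_of_apollonian hA
  obtain ⟨p, hp, hpV, hpc, hlen⟩ := mainA m _ _ _ hA2 hF 0 1 2 rfl
    (by norm_num) (by norm_num) (by norm_num)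
  obtain ⟨f, hf, h1f, h2f⟩ := hA2.edge 1 2 (by simp) (by simp)
  have hadj : (apGraph F).Adj 1 2 := ⟨by norm_num, f, hf, h1f, h2f⟩
  refine ⟨0, 2, p.concat hadj, ?_, ?_⟩
  · rw [SimpleGraph.Walk.isPath_def, SimpleGraph.Walk.support_concat, List.nodup_append]
    exact ⟨hp.support_nodup, List.nodup_singleton 2,
      fun x hx y hy hxy => by subst hxy; exact hpc ((List.mem_singleton.mp hy) ▸ hx)⟩
  · rw [SimpleGraph.Walk.support_concat, List.length_append, List.length_singleton]
    push_cast
    have : (m:ℝ) ^ xiA = (m:ℝ) ^ (Real.log 2/Real.log 3) := rfl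
    rw [← this]
    linarith
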